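/- Let E ⊆ 𝕋 be an open subset of the circle written as an at most countable union of pairwise disjoint open arcs with lengths (l_k), and let d_X = inf{β > 0 : Σ_k l_k^β < ∞} be its Besicovitch–Taylor index. Then for every α with 0 ≤ α < 1 − d_X there exists C > 0 such that τ(h,E) ≤ C·h^α for all h ∈ (0,1]. -/

import Mathlib

open MeasureTheory Set

/-- `τ(h,E)`: the measure of the set where the characteristic function of `E`
translated by `h` differs from itself. -/
noncomputable def tau (h : ℝ) (E : Set (AddCircle (1:ℝ))) : ℝ :=
  (volume {x : AddCircle (1:ℝ) |
    E.indicator (fun _ => (1:ℝ)) (x + ((h : ℝ) : AddCircle (1:ℝ)))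
      ≠ E.indicator (fun _ => (1:ℝ)) x}).toReal

/-- The open arc of the circle which is the image of the interval `(a, a+l)`. -/
noncomputable def arc (a l : ℝ) : Set (AddCircle (1:ℝ)) :=
  (fun r : ℝ => (r : AddCircle (1:ℝ))) '' Set.Ioo a (a + l)


lemma coe_inj_close {y z : ℝ} (h : |y - z| < 1) (he : (y : AddCircle (1:ℝ)) = z) : y = z := by
  have := QuotientAddGroup.eq.mp he
  obtain ⟨n, hn⟩ := AddSubgroup.mem_zmultiples_iff.mp this
  rw [zsmul_eq_mul, mul_one] at hn
  have h1 : |(n:ℝ)| < 1 := by rw [hn]; rw [abs_sub_comm] at h; simpa [neg_add_eq_sub] using h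
  have h2 : (-1:ℝ) < n ∧ (n:ℝ) < 1 := abs_lt.mp h1
  have h3 : n = 0 := by
    have hl : (-1:ℤ) < n := by exact_mod_cast h2.1
    have hr : n < (1:ℤ) := by exact_mod_cast h2.2
    omega
  rw [h3] at hn; push_cast at hn; linarith

lemma volume_image_Ioo (c d : ℝ) (hd : d ≤ c + 1) :
    volume ((fun r : ℝ => (r : AddCircle (1:ℝ))) '' Ioo c d) = ENNReal.ofReal (d - c) := by
  rcases le_or_gt d c with hdc | hdc
  · rw [Ioo_eq_empty (by exact not_lt.mpr hdc), image_empty, measure_empty,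
      ENNReal.ofReal_eq_zero.mpr (by linarith)]
  · have hopen : IsOpen ((fun r : ℝ => (r : AddCircle (1:ℝ))) '' Ioo c d) :=
      QuotientAddGroup.isOpenMap_coe _ isOpen_Ioo
    rw [AddCircle.add_projection_respects_measure (1:ℝ) c hopen.measurableSet]
    have hkey : (fun r : ℝ => (r : AddCircle (1:ℝ))) ⁻¹'
        ((fun r : ℝ => (r : AddCircle (1:ℝ))) '' Ioo c d) ∩ Ioc c (c + 1) = Ioo c d := by
      ext y
      constructor
      · rintro ⟨⟨z, hz, hzy⟩, hy⟩
        have : z = y := coe_inj_close (by rw [abs_lt]; constructor <;>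
          [nlinarith [hz.1, hz.2, hy.1, hy.2]; nlinarith [hz.1, hz.2, hy.1, hy.2]]) hzy
        rwa [← this]
      · intro hy
        exact ⟨⟨y, hy, rfl⟩, ⟨hy.1, by linarith [hy.2]⟩⟩
    rw [hkey, Real.volume_Ioo]

lemma vol_singleton (x : AddCircle (1:ℝ)) : volume ({x} : Set (AddCircle (1:ℝ))) = 0 := by
  obtain ⟨d, rfl⟩ := QuotientAddGroup.mk_surjective x
  rw [AddCircle.add_projection_respects_measure (1:ℝ) d (measurableSet_singleton _)]
  refine measure_mono_null (fun y hy => ?_) (Real.volume_singleton (a := d + 1))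
  obtain ⟨hy1, hy2⟩ := hy
  have he : (y : AddCircle (1:ℝ)) = ((d + 1 : ℝ) : AddCircle (1:ℝ)) := by
    have : ((d + 1 : ℝ) : AddCircle (1:ℝ)) = ((d : ℝ) : AddCircle (1:ℝ)) := by
      rw [AddCircle.coe_add]
      simp
    rw [this]
    simpa using hy1
  have := coe_inj_close (by rw [abs_lt]; constructor <;> [linarith [hy2.1]; linarith [hy2.2]]) he
  simpa using this

lemma volume_image_Ioc_le (c d : ℝ) (hd : d ≤ c + 1) :
    volume ((fun r : ℝ => (r : AddCircle (1:ℝ))) '' Ioc c d) ≤ ENNReal.ofReal (d - c) := by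
  have hsub : Ioc c d ⊆ Ioo c d ∪ {d} := by
    intro y hy; rcases lt_or_eq_of_le hy.2 with h | h
    · exact Or.inl ⟨hy.1, h⟩
    · exact Or.inr h
  calc volume ((fun r : ℝ => (r : AddCircle (1:ℝ))) '' Ioc c d)
      ≤ volume ((fun r : ℝ => (r : AddCircle (1:ℝ))) '' Ioo c d ∪ {((d:ℝ) : AddCircle (1:ℝ))}) := by
        refine measure_mono ?_
        rintro x ⟨z, hz, rfl⟩
        rcases hsub hz with h | h
        · exact Or.inl ⟨z, h, rfl⟩
        · exact Or.inr (by simp_all)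
    _ ≤ volume ((fun r : ℝ => (r : AddCircle (1:ℝ))) '' Ioo c d) + volume ({((d:ℝ) : AddCircle (1:ℝ))} : Set (AddCircle (1:ℝ))) := measure_union_le _ _
    _ = ENNReal.ofReal (d - c) := by rw [volume_image_Ioo c d hd, vol_singleton, add_zero]

lemma volume_image_Ico_le (c d : ℝ) (hd : d ≤ c + 1) :
    volume ((fun r : ℝ => (r : AddCircle (1:ℝ))) '' Ico c d) ≤ ENNReal.ofReal (d - c) := by
  have hsub : Ico c d ⊆ Ioo c d ∪ {c} := by
    intro y hy; rcases lt_or_eq_of_le hy.1 with h | h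
    · exact Or.inl ⟨h, hy.2⟩
    · exact Or.inr h.symm
  calc volume ((fun r : ℝ => (r : AddCircle (1:ℝ))) '' Ico c d)
      ≤ volume ((fun r : ℝ => (r : AddCircle (1:ℝ))) '' Ioo c d ∪ {((c:ℝ) : AddCircle (1:ℝ))}) := by
        refine measure_mono ?_
        rintro x ⟨z, hz, rfl⟩
        rcases hsub hz with h | h
        · exact Or.inl ⟨z, h, rfl⟩
        · exact Or.inr (by simp_all)
    _ ≤ volume ((fun r : ℝ => (r : AddCircle (1:ℝ))) '' Ioo c d) + volume ({((c:ℝ) : AddCircle (1:ℝ))} : Set (AddCircle (1:ℝ))) := measure_union_le _ _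
    _ = ENNReal.ofReal (d - c) := by rw [volume_image_Ioo c d hd, vol_singleton, add_zero]

/-- If `E ⊆ 𝕋` is an at most countable union of pairwise disjoint open
arcs of lengths `l k` with Besicovitch–Taylor index `d_X = inf{β > 0 : Σ l_k^β < ∞}`, then
for every `0 ≤ α < 1 - d_X` there is `C > 0` with `τ(h,E) ≤ C·h^α` for all `h ∈ (0,1]`. -/
theorem stmt_11 {ι : Type} [Countable ι] (a l : ι → ℝ) (E : Set (AddCircle (1:ℝ)))
    (hE : E = ⋃ k, arc (a k) (l k))
    (hlen : ∀ k, l k ∈ Set.Ioc (0:ℝ) 1)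
    (hdisj : Pairwise (Function.onFun Disjoint (fun k => arc (a k) (l k)))) :
    ∀ α : ℝ, 0 ≤ α →
      α < 1 - sInf {β : ℝ | 0 < β ∧ Summable (fun k => l k ^ β)} →
      ∃ C > 0, ∀ h ∈ Set.Ioc (0:ℝ) 1, tau h E ≤ C * h ^ α := by
  intro α hα0 hαlt
  -- summability of lengths
  have harc_vol : ∀ k, volume (arc (a k) (l k)) = ENNReal.ofReal (l k) := by
    intro k
    have := volume_image_Ioo (a k) (a k + l k) (by linarith [(hlen k).2])
    simpa [arc] using this
  have hsum_l : Summable l := by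
    have hmeas : ∀ k, MeasurableSet (arc (a k) (l k)) := fun k =>
      (QuotientAddGroup.isOpenMap_coe _ isOpen_Ioo).measurableSet
    have hU : volume (⋃ k, arc (a k) (l k)) = ∑' k, volume (arc (a k) (l k)) :=
      measure_iUnion hdisj hmeas
    have hfin : (∑' k, volume (arc (a k) (l k))) ≠ ⊤ := by
      rw [← hU]; exact (measure_lt_top _ _).ne
    have := ENNReal.summable_toReal hfin
    refine this.congr fun k => ?_
    rw [harc_vol k, ENNReal.toReal_ofReal (hlen k).1.le]
  have h1mem : (1:ℝ) ∈ {β : ℝ | 0 < β ∧ Summable (fun k => l k ^ β)} :=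
    ⟨one_pos, by simpa [Real.rpow_one] using hsum_l⟩
  have hbdd : BddBelow {β : ℝ | 0 < β ∧ Summable (fun k => l k ^ β)} :=
    ⟨0, fun β hβ => hβ.1.le⟩
  obtain ⟨β, hβmem, hβlt⟩ := (csInf_lt_iff hbdd ⟨1, h1mem⟩).mp
    (show sInf {β : ℝ | 0 < β ∧ Summable (fun k => l k ^ β)} < 1 - α by linarith)
  have hβpos : 0 < β := hβmem.1
  have hβsum : Summable (fun k => l k ^ β) := hβmem.2
  have hβle : α ≤ 1 - β := by linarith
  have hβ1 : β ≤ 1 := by linarith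
  set S := ∑' k, l k ^ β with hSdef
  have hS0 : 0 ≤ S := tsum_nonneg fun k => Real.rpow_nonneg (hlen k).1.le β
  refine ⟨2 * S + 1, by positivity, fun h hh => ?_⟩
  obtain ⟨hh0, hh1⟩ := hh
  have hhb : 0 < h ^ (1 - β) := Real.rpow_pos_of_pos hh0 _
  -- the cover sets
  set U : ι → Set (AddCircle (1:ℝ)) := fun k =>
    (fun r : ℝ => (r : AddCircle (1:ℝ))) '' Ioc (a k - h) (min (a k) (a k - h + l k)) with hUdef
  set V : ι → Set (AddCircle (1:ℝ)) := fun k =>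
    (fun r : ℝ => (r : AddCircle (1:ℝ))) '' Ico (max (a k) (a k + l k - h)) (a k + l k) with hVdef
  -- the difference set
  set D : Set (AddCircle (1:ℝ)) := {x : AddCircle (1:ℝ) |
    E.indicator (fun _ => (1:ℝ)) (x + ((h : ℝ) : AddCircle (1:ℝ)))
      ≠ E.indicator (fun _ => (1:ℝ)) x} with hDdef
  have hDmem : ∀ x, x ∈ D ↔
      ((x + ((h : ℝ) : AddCircle (1:ℝ)) ∈ E ∧ x ∉ E) ∨
       (x + ((h : ℝ) : AddCircle (1:ℝ)) ∉ E ∧ x ∈ E)) := by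
    intro x
    by_cases h1 : x + ((h : ℝ) : AddCircle (1:ℝ)) ∈ E <;> by_cases h2 : x ∈ E <;>
      simp [hDdef, Set.indicator_apply, h1, h2]
  have hcov : D ⊆ ⋃ k, (U k ∪ V k) := by
    intro x hx
    rcases (hDmem x).mp hx with ⟨hin, hout⟩ | ⟨hout, hin⟩
    · rw [hE] at hin
      obtain ⟨_, ⟨k, rfl⟩, z, hz, hz2⟩ := hin
      have hxk : x ∉ arc (a k) (l k) := by
        rw [hE] at hout; exact fun hc => hout (Set.mem_iUnion.mpr ⟨k, hc⟩)
      have hz2' : ((z:ℝ) : AddCircle (1:ℝ)) = x + ((h : ℝ) : AddCircle (1:ℝ)) := hz2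
      have hxeq : x = ((z - h : ℝ) : AddCircle (1:ℝ)) := by
        rw [AddCircle.coe_sub, hz2']; abel
      have hle : z - h ≤ a k := by
        by_contra hcon
        push_neg at hcon
        exact hxk ⟨z - h, ⟨hcon, by linarith [hz.2]⟩, hxeq.symm⟩
      refine Set.mem_iUnion.mpr ⟨k, Or.inl ⟨z - h, ⟨by linarith [hz.1], le_min hle (by linarith [hz.2])⟩, hxeq.symm⟩⟩
    · rw [hE] at hin
      obtain ⟨_, ⟨k, rfl⟩, y, hy, hy2⟩ := hin
      have hxk : x + ((h : ℝ) : AddCircle (1:ℝ)) ∉ arc (a k) (l k) := by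
        rw [hE] at hout; exact fun hc => hout (Set.mem_iUnion.mpr ⟨k, hc⟩)
      have hy2' : ((y:ℝ) : AddCircle (1:ℝ)) = x := hy2
      have hxeq : x + ((h : ℝ) : AddCircle (1:ℝ)) = ((y + h : ℝ) : AddCircle (1:ℝ)) := by
        rw [AddCircle.coe_add, hy2']
      have hge : a k + l k - h ≤ y := by
        by_contra hcon
        push_neg at hcon
        exact hxk ⟨y + h, ⟨by linarith [hy.1], by linarith⟩, hxeq.symm⟩
      refine Set.mem_iUnion.mpr ⟨k, Or.inr ⟨y, ⟨max_le hy.1.le hge, hy.2⟩, hy2⟩⟩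
  -- volume bounds on the cover
  have hUvol : ∀ k, volume (U k) ≤ ENNReal.ofReal (min h (l k)) := by
    intro k
    have hb : min (a k) (a k - h + l k) ≤ (a k - h) + 1 :=
      le_trans (min_le_left _ _) (by linarith)
    have := volume_image_Ioc_le (a k - h) (min (a k) (a k - h + l k)) hb
    have heq : min (a k) (a k - h + l k) - (a k - h) = min h (l k) := by
      rcases le_total h (l k) with hc | hc
      · rw [min_eq_left (by linarith : a k ≤ a k - h + l k), min_eq_left hc]; ring
      · rw [min_eq_right (by linarith : a k - h + l k ≤ a k), min_eq_right hc]; ring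
    rwa [heq] at this
  have hVvol : ∀ k, volume (V k) ≤ ENNReal.ofReal (min h (l k)) := by
    intro k
    have hb : a k + l k ≤ (max (a k) (a k + l k - h)) + 1 :=
      le_trans (by linarith : a k + l k ≤ a k + l k - h + 1) (by linarith [le_max_right (a k) (a k + l k - h)])
    have := volume_image_Ico_le (max (a k) (a k + l k - h)) (a k + l k) hb
    have heq : a k + l k - max (a k) (a k + l k - h) = min h (l k) := by
      rcases le_total h (l k) with hc | hc
      · rw [max_eq_right (by linarith : a k ≤ a k + l k - h), min_eq_left hc]; ring
      · rw [max_eq_left (by linarith : a k + l k - h ≤ a k), min_eq_right hc]; ring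
    rwa [heq] at this
  -- pointwise real bound
  have hmin : ∀ k, min h (l k) ≤ h ^ (1 - β) * l k ^ β := by
    intro k
    have hl0 := (hlen k).1
    rcases le_total h (l k) with hc | hc
    · rw [min_eq_left hc]
      calc h = h ^ (1 - β) * h ^ β := by
            rw [← Real.rpow_add hh0]; norm_num
        _ ≤ h ^ (1 - β) * l k ^ β :=
            mul_le_mul_of_nonneg_left (Real.rpow_le_rpow hh0.le hc hβpos.le) hhb.le
    · rw [min_eq_right hc]
      calc l k = l k ^ (1 - β) * l k ^ β := by
            rw [← Real.rpow_add hl0]; norm_num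
        _ ≤ h ^ (1 - β) * l k ^ β :=
            mul_le_mul_of_nonneg_right (Real.rpow_le_rpow hl0.le hc (by linarith))
              (Real.rpow_nonneg hl0.le β)
  -- summability of the bound
  have hsumb : Summable (fun k => 2 * h ^ (1 - β) * l k ^ β) := hβsum.mul_left _
  have hbnn : ∀ k, (0:ℝ) ≤ 2 * h ^ (1 - β) * l k ^ β := fun k =>
    mul_nonneg (by positivity) (Real.rpow_nonneg (hlen k).1.le β)
  -- main volume chain
  have hvolD : volume D ≤ ENNReal.ofReal (2 * h ^ (1 - β) * S) := by
    calc volume D ≤ volume (⋃ k, (U k ∪ V k)) := measure_mono hcov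
      _ ≤ ∑' k, volume (U k ∪ V k) := measure_iUnion_le _
      _ ≤ ∑' k, ENNReal.ofReal (2 * h ^ (1 - β) * l k ^ β) := by
          refine ENNReal.tsum_le_tsum fun k => ?_
          calc volume (U k ∪ V k) ≤ volume (U k) + volume (V k) := measure_union_le _ _
            _ ≤ ENNReal.ofReal (min h (l k)) + ENNReal.ofReal (min h (l k)) :=
                add_le_add (hUvol k) (hVvol k)
            _ = ENNReal.ofReal (2 * min h (l k)) := by
                rw [← ENNReal.ofReal_add (le_min hh0.le (hlen k).1.le) (le_min hh0.le (hlen k).1.le)]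
                ring_nf
            _ ≤ ENNReal.ofReal (2 * h ^ (1 - β) * l k ^ β) :=
                ENNReal.ofReal_le_ofReal (by nlinarith [hmin k])
      _ = ENNReal.ofReal (∑' k, 2 * h ^ (1 - β) * l k ^ β) :=
          (ENNReal.ofReal_tsum_of_nonneg hbnn hsumb).symm
      _ = ENNReal.ofReal (2 * h ^ (1 - β) * S) := by rw [tsum_mul_left]
  have htau : tau h E ≤ 2 * h ^ (1 - β) * S := by
    have : (0:ℝ) ≤ 2 * h ^ (1 - β) * S := by positivity
    exact ENNReal.toReal_le_of_le_ofReal this hvolD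
  calc tau h E ≤ 2 * h ^ (1 - β) * S := htau
    _ = 2 * S * h ^ (1 - β) := by ring
    _ ≤ 2 * S * h ^ α := by
        have := Real.rpow_le_rpow_of_exponent_ge hh0 hh1 hβle
        exact mul_le_mul_of_nonneg_left this (by positivity)
    _ ≤ (2 * S + 1) * h ^ α := by
        have : (0:ℝ) < h ^ α := Real.rpow_pos_of_pos hh0 α
        nlinarith
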